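/- arXiv:1703.07872 — 5 statements merged into one kernel-verified Lean document; each statement's English description precedes it below -/
import Mathlib

section
/- Let (ψ, μ) be a C-bounded random feature scheme for a normalized kernel k on a measurable space X, with ψ jointly measurable, and let f̌ ∈ L²(Ω, μ) be complex-valued. Define f(x) = E_{ω∼μ}[Re(f̌(ω) · conj(ψ(ω,x)))] and, for i.i.d. samples ω₁, …, ω_q from μ, f_ω(x) = (1/q) ∑_{i=1}^q Re(f̌(ω_i) · conj(ψ(ω_i, x))). Then for every probability measure χ on X, E_ω[ ( ∫_X |f(x) − f_ω(x)|² dχ(x) )^{1/2} ] ≤ C ‖f̌‖_{L²(μ)} / √q. -/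
open MeasureTheory

/-- **Function approximation in `L²(χ)` norm.**
`(ψ, μ)` is a `C`-bounded RFS (with `ψ` jointly measurable) for the normalized kernel `k`.
For `f̌ ∈ L²(Ω,μ)`, `f(x) = E_ω[Re(f̌(ω) conj (ψ(ω,x)))]` and the empirical approximation
`f_ω(x) = (1/q) ∑ᵢ Re(f̌(ωᵢ) conj (ψ(ωᵢ,x)))` from `q` i.i.d. samples, for every
probability measure `χ` on `X` we have `E_ω ‖f - f_ω‖_{2,χ} ≤ C ‖f̌‖_{L²(μ)} / √q`. -/
theorem function_approximation_L2
    {Ω X : Type*} [MeasurableSpace Ω] [MeasurableSpace X]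
    (μ : Measure Ω) [IsProbabilityMeasure μ]
    (ψ : Ω → X → ℂ) (k : X → X → ℝ) (C : ℝ)
    (hmeas : Measurable (Function.uncurry ψ))
    (hL2 : ∀ x, MemLp (fun ω => ψ ω x) 2 μ)
    (hbdd : ∀ ω x, ‖ψ ω x‖ ≤ C)
    (hnormalized : ∀ x, k x x = 1)
    (hkernel : ∀ x x', ∫ ω, ψ ω x * (starRingEnd ℂ) (ψ ω x') ∂μ = (k x x' : ℂ))
    (fc : Ω → ℂ) (hfcmeas : Measurable fc) (hfcL2 : MemLp fc 2 μ)
    (f : X → ℝ) (hf : ∀ x, f x = ∫ ω, (fc ω * (starRingEnd ℂ) (ψ ω x)).re ∂μ)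
    (q : ℕ) (hq : 0 < q)
    (χ : Measure X) [IsProbabilityMeasure χ] :
    ∫ w : Fin q → Ω,
        Real.sqrt (∫ x,
          (f x - (1 / (q : ℝ)) * ∑ i, (fc (w i) * (starRingEnd ℂ) (ψ (w i) x)).re) ^ 2 ∂χ)
        ∂(Measure.pi fun _ : Fin q => μ)
      ≤ C * Real.sqrt (∫ ω, ‖fc ω‖ ^ 2 ∂μ) / Real.sqrt q := by
  classical
  letI : MeasureSpace Ω := ⟨μ⟩
  have hvol : (volume : Measure Ω) = μ := rfl
  have hPvol : (Measure.pi fun _ : Fin q => μ) = (volume : Measure (Fin q → Ω)) := rfl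
  haveI : IsProbabilityMeasure (volume : Measure Ω) := ‹_›
  haveI : IsProbabilityMeasure (volume : Measure (Fin q → Ω)) := by
    rw [← hPvol]; infer_instance
  have hΩ : Nonempty Ω := Measure.nonempty_of_neZero μ
  have hXne : Nonempty X := Measure.nonempty_of_neZero χ
  have hC : 0 ≤ C := le_trans (norm_nonneg _) (hbdd hΩ.some hXne.some)
  have hqR : (0 : ℝ) < (q : ℝ) := by exact_mod_cast hq
  set G : Ω → X → ℝ := fun ω x => (fc ω * (starRingEnd ℂ) (ψ ω x)).re with hG
  set V : ℝ := ∫ ω, ‖fc ω‖ ^ 2 ∂μ with hV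
  have hVnn : 0 ≤ V := integral_nonneg fun ω => by positivity
  -- measurability of G
  have hGm : Measurable (Function.uncurry G) := by
    apply Complex.measurable_re.comp
    exact (hfcmeas.comp measurable_fst).mul (Complex.continuous_conj.measurable.comp hmeas)
  have hGxm : ∀ x, Measurable fun ω => G ω x := fun x =>
    hGm.comp (measurable_id.prodMk measurable_const)
  -- pointwise bound
  have hGbd : ∀ ω x, |G ω x| ≤ C * ‖fc ω‖ := by
    intro ω x
    calc |G ω x| ≤ ‖fc ω * (starRingEnd ℂ) (ψ ω x)‖ := Complex.abs_re_le_norm _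
      _ = ‖fc ω‖ * ‖ψ ω x‖ := by
          rw [norm_mul, Complex.norm_conj]
      _ ≤ ‖fc ω‖ * C :=
          mul_le_mul_of_nonneg_left (hbdd ω x) (norm_nonneg _)
      _ = C * ‖fc ω‖ := mul_comm _ _
  have hGsqbd : ∀ ω x, (G ω x) ^ 2 ≤ C ^ 2 * ‖fc ω‖ ^ 2 := by
    intro ω x
    have h2 : (G ω x) ^ 2 ≤ (C * ‖fc ω‖) ^ 2 := by
      rw [← sq_abs]
      exact pow_le_pow_left₀ (abs_nonneg _) (hGbd ω x) 2
    calc (G ω x) ^ 2 ≤ (C * ‖fc ω‖) ^ 2 := h2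
      _ = C ^ 2 * ‖fc ω‖ ^ 2 := by ring
  -- integrabilities over μ
  have hfc_int : Integrable fc μ := hfcL2.integrable one_le_two
  have habsfc_int : Integrable (fun ω => ‖fc ω‖) μ := by
    simpa using hfc_int.norm
  have habsfc2_int : Integrable (fun ω => ‖fc ω‖ ^ 2) μ := by
    have := hfcL2.norm.integrable_sq
    simpa using this
  have hG_int : ∀ x, Integrable (fun ω => G ω x) μ := by
    intro x
    refine Integrable.mono' (habsfc_int.const_mul C) (hGxm x).aestronglyMeasurable ?_
    exact Filter.Eventually.of_forall fun ω => by
      simpa [Real.norm_eq_abs] using hGbd ω x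
  have hG2_int : ∀ x, Integrable (fun ω => (G ω x) ^ 2) μ := by
    intro x
    refine Integrable.mono' (habsfc2_int.const_mul (C ^ 2))
      ((hGxm x).pow_const 2).aestronglyMeasurable ?_
    refine Filter.Eventually.of_forall fun ω => ?_
    calc ‖(G ω x) ^ 2‖ = (G ω x) ^ 2 := by
          rw [Real.norm_eq_abs, abs_of_nonneg (sq_nonneg _)]
      _ ≤ C ^ 2 * ‖fc ω‖ ^ 2 := hGsqbd ω x
  have hG2_le : ∀ x, ∫ ω, (G ω x) ^ 2 ∂μ ≤ C ^ 2 * V := by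
    intro x
    rw [hV, ← integral_const_mul]
    exact integral_mono (hG2_int x) (habsfc2_int.const_mul _) fun ω => hGsqbd ω x
  have hfx : ∀ x, ∫ ω, G ω x ∂μ = f x := fun x => (hf x).symm
  -- key variance bound, for each x
  have KEY : ∀ x, ∫ w : Fin q → Ω, (f x - (1 / (q : ℝ)) * ∑ i, G (w i) x) ^ 2
      ≤ C ^ 2 * V / q := by
    intro x
    set m : ℝ := f x with hm
    set h : Ω → ℝ := fun ω => G ω x - m with hh
    have hh_int : Integrable h μ := (hG_int x).sub (integrable_const m)
    have hh2_eq : (fun ω => h ω ^ 2)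
        = fun ω => G ω x ^ 2 - ((2 * m) * G ω x - m ^ 2) := by
      funext ω; simp only [hh]; ring
    have hh2_int : Integrable (fun ω => h ω ^ 2) μ := by
      rw [hh2_eq]
      exact (hG2_int x).sub (((hG_int x).const_mul (2 * m)).sub (integrable_const _))
    have hh_zero : ∫ ω, h ω ∂μ = 0 := by
      simp only [hh]
      rw [integral_sub (hG_int x) (integrable_const m), hfx x, integral_const]
      simp [hm]
    have hh2_le : ∫ ω, h ω ^ 2 ∂μ ≤ C ^ 2 * V := by
      have key1 : ∫ ω, (G ω x ^ 2 - (2 * m * G ω x - m ^ 2)) ∂μ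
          = (∫ ω, G ω x ^ 2 ∂μ) - ∫ ω, (2 * m * G ω x - m ^ 2) ∂μ :=
        integral_sub (hG2_int x)
          (by exact ((hG_int x).const_mul (2 * m)).sub (integrable_const _))
      have key2 : ∫ ω, (2 * m * G ω x - m ^ 2) ∂μ
          = (∫ ω, 2 * m * G ω x ∂μ) - ∫ (_ : Ω), m ^ 2 ∂μ :=
        integral_sub (by exact (hG_int x).const_mul (2 * m)) (integrable_const _)
      have key3 : ∫ ω, 2 * m * G ω x ∂μ = 2 * m * ∫ ω, G ω x ∂μ := integral_const_mul _ _
      have key4 : ∫ (_ : Ω), m ^ 2 ∂μ = m ^ 2 := by simp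
      rw [hh2_eq, key1, key2, key3, key4, hfx x]
      nlinarith [hG2_le x, sq_nonneg m]
    -- products of coordinate functions
    set F : Fin q → Fin q → Fin q → Ω → ℝ :=
      fun i j l y => (if l = i then h y else 1) * (if l = j then h y else 1) with hF
    have hF_int : ∀ i j l, Integrable (F i j l) μ := by
      intro i j l
      rcases eq_or_ne l i with rfl | hli
      · rcases eq_or_ne l j with rfl | hlj
        · have e : F l l l = fun y => h y * h y := by funext y; simp [hF]
          rw [e]; simpa [pow_two] using hh2_int
        · have e : F l j l = h := by funext y; simp [hF, hlj]
          rw [e]; exact hh_int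
      · rcases eq_or_ne l j with rfl | hlj
        · have e : F i l l = h := by funext y; simp [hF, hli]
          rw [e]; exact hh_int
        · have e : F i j l = fun _ => 1 := by funext y; simp [hF, hli, hlj]
          rw [e]; exact integrable_const 1
    have hFprod : ∀ i j (w : Fin q → Ω), h (w i) * h (w j) = ∏ l, F i j l (w l) := by
      intro i j w
      simp only [hF]
      rw [Finset.prod_mul_distrib]
      congr 1 <;> simp
    have hint_term : ∀ i j, Integrable (fun w : Fin q → Ω => h (w i) * h (w j)) volume := by
      intro i j
      have hprod := Integrable.fintype_prod (𝕜 := ℝ) (f := F i j) (hF_int i j)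
      have heq : (fun w : Fin q → Ω => ∏ l, F i j l (w l))
          = fun w => h (w i) * h (w j) := funext fun w => (hFprod i j w).symm
      rwa [heq] at hprod
    have hint_eval : ∀ i j, ∫ w : Fin q → Ω, h (w i) * h (w j)
        = if i = j then ∫ ω, h ω ^ 2 ∂μ else 0 := by
      intro i j
      have h1 : ∫ w : Fin q → Ω, h (w i) * h (w j) = ∫ w : Fin q → Ω, ∏ l, F i j l (w l) := by
        congr 1; funext w; exact hFprod i j w
      rw [h1, show (volume : Measure (Fin q → Ω)) = Measure.pi (fun _ => volume) from rfl,
        integral_fintype_prod_eq_prod (ι := Fin q) (f := F i j)]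
      by_cases hij : i = j
      · subst hij
        rw [if_pos rfl]
        have hcl : ∀ l, (∫ y, F i i l y) = if l = i then (∫ ω, h ω ^ 2 ∂μ) else 1 := by
          intro l
          by_cases hl : l = i
          · subst hl
            rw [if_pos rfl]
            have e : F l l l = fun y => h y ^ 2 := by
              funext y; simp [hF, pow_two]
            rw [e]
            rfl
          · rw [if_neg hl]
            have e : F i i l = fun _ => 1 := by funext y; simp [hF, hl]
            rw [e]
            simp
        rw [Finset.prod_congr rfl fun l _ => hcl l, Finset.prod_ite_eq']
        simp
      · rw [if_neg hij]
        refine Finset.prod_eq_zero (Finset.mem_univ i) ?_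
        have : F i j i = fun y => h y := by
          funext y; simp [hF, hij]
        rw [this]
        exact hh_zero
    have hsum : ∫ w : Fin q → Ω, (∑ i, h (w i)) ^ 2 = q * ∫ ω, h ω ^ 2 ∂μ := by
      have hexp : ∀ w : Fin q → Ω, (∑ i, h (w i)) ^ 2 = ∑ i, ∑ j, h (w i) * h (w j) := by
        intro w; rw [sq, Finset.sum_mul_sum]
      simp_rw [hexp]
      rw [integral_finset_sum _ (fun i _ => integrable_finset_sum _ fun j _ => hint_term i j)]
      have : ∀ i : Fin q, ∫ w : Fin q → Ω, ∑ j, h (w i) * h (w j)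
          = ∑ j, ∫ w : Fin q → Ω, h (w i) * h (w j) :=
        fun i => integral_finset_sum _ fun j _ => hint_term i j
      rw [Finset.sum_congr rfl fun i _ => this i]
      simp_rw [hint_eval]
      simp [Finset.sum_ite_eq]
    have hrw : ∀ w : Fin q → Ω,
        (f x - (1 / (q : ℝ)) * ∑ i, G (w i) x) ^ 2
          = (1 / (q : ℝ)) ^ 2 * (∑ i, h (w i)) ^ 2 := by
      intro w
      have hsum_h : ∑ i, h (w i) = (∑ i, G (w i) x) - q * m := by
        simp only [hh]
        rw [Finset.sum_sub_distrib]
        simp [mul_comm]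
      rw [hsum_h, ← hm]
      field_simp
      ring
    calc ∫ w : Fin q → Ω, (f x - (1 / (q : ℝ)) * ∑ i, G (w i) x) ^ 2
        = ∫ w : Fin q → Ω, (1 / (q : ℝ)) ^ 2 * (∑ i, h (w i)) ^ 2 := by
          congr 1; funext w; exact hrw w
      _ = (1 / (q : ℝ)) ^ 2 * ∫ w : Fin q → Ω, (∑ i, h (w i)) ^ 2 := integral_const_mul _ _
      _ = (1 / (q : ℝ)) ^ 2 * (q * ∫ ω, h ω ^ 2 ∂μ) := by rw [hsum]
      _ = (∫ ω, h ω ^ 2 ∂μ) / q := by field_simp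
      _ ≤ C ^ 2 * V / q := div_le_div_of_nonneg_right hh2_le hqR.le
  -- the function S and its properties
  set S : (Fin q → Ω) → X → ℝ :=
    fun w x => (f x - (1 / (q : ℝ)) * ∑ i, G (w i) x) ^ 2 with hS
  have hfm : Measurable f := by
    have h1 : Measurable fun p : X × Ω => G p.2 p.1 := hGm.comp measurable_swap
    have h2 := h1.stronglyMeasurable.integral_prod_right' (ν := μ)
    have h3 : f = fun x => ∫ ω, G ω x ∂μ := funext fun x => hf x
    rw [h3]; exact h2.measurable
  have hSm : Measurable (Function.uncurry S) := by
    have hsum : Measurable fun p : (Fin q → Ω) × X => ∑ i, G (p.1 i) p.2 := by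
      apply Finset.measurable_sum
      intro i _
      have e : (fun p : (Fin q → Ω) × X => G (p.1 i) p.2)
          = Function.uncurry G ∘ fun p : (Fin q → Ω) × X => (p.1 i, p.2) := rfl
      rw [e]
      exact hGm.comp (((measurable_pi_apply i).comp measurable_fst).prodMk measurable_snd)
    exact (((hfm.comp measurable_snd).sub (measurable_const.mul hsum)).pow_const 2)
  -- bound for the integrand on the product space
  set MA : ℝ := C * ∫ ω, ‖fc ω‖ ∂μ with hMA
  have hfbd : ∀ x, |f x| ≤ MA := by
    intro x
    rw [← hfx x]
    calc |∫ ω, G ω x ∂μ| ≤ ∫ ω, |G ω x| ∂μ := by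
          simpa [Real.norm_eq_abs] using norm_integral_le_integral_norm (fun ω => G ω x) (μ := μ)
      _ ≤ ∫ ω, C * ‖fc ω‖ ∂μ :=
          integral_mono (hG_int x).abs (habsfc_int.const_mul C) fun ω => hGbd ω x
      _ = MA := integral_const_mul _ _
  set B : (Fin q → Ω) → ℝ :=
    fun w => 2 * MA ^ 2 + (2 * C ^ 2 / q) * ∑ i, ‖fc (w i)‖ ^ 2 with hB
  have hSB : ∀ w x, S w x ≤ B w := by
    intro w x
    set a := f x
    set b := (1 / (q : ℝ)) * ∑ i, G (w i) x with hb
    have h1 : S w x = (a - b) ^ 2 := rfl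
    have h2 : (a - b) ^ 2 ≤ 2 * a ^ 2 + 2 * b ^ 2 := by nlinarith [sq_nonneg (a + b)]
    have ha : a ^ 2 ≤ MA ^ 2 := by
      rw [← sq_abs a]
      exact pow_le_pow_left₀ (abs_nonneg _) (hfbd x) 2
    have hbb : b ^ 2 ≤ (1 / (q : ℝ)) * ∑ i, (G (w i) x) ^ 2 := by
      rw [hb, mul_pow]
      have hcs : (∑ i, G (w i) x) ^ 2 ≤ (q : ℝ) * ∑ i, (G (w i) x) ^ 2 := by
        simpa [Finset.card_univ] using
          sq_sum_le_card_mul_sum_sq (s := (Finset.univ : Finset (Fin q)))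
            (f := fun i => G (w i) x)
      calc (1 / (q : ℝ)) ^ 2 * (∑ i, G (w i) x) ^ 2
          ≤ (1 / (q : ℝ)) ^ 2 * ((q : ℝ) * ∑ i, (G (w i) x) ^ 2) := by
            exact mul_le_mul_of_nonneg_left hcs (by positivity)
        _ = (1 / (q : ℝ)) * ∑ i, (G (w i) x) ^ 2 := by field_simp
    have hbc : (1 / (q : ℝ)) * ∑ i, (G (w i) x) ^ 2
        ≤ (1 / (q : ℝ)) * ∑ i, C ^ 2 * ‖fc (w i)‖ ^ 2 := by
      refine mul_le_mul_of_nonneg_left ?_ (by positivity)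
      exact Finset.sum_le_sum fun i _ => hGsqbd (w i) x
    have : S w x ≤ 2 * MA ^ 2 + 2 * ((1 / (q : ℝ)) * ∑ i, C ^ 2 * ‖fc (w i)‖ ^ 2) := by
      rw [h1]; nlinarith
    calc S w x ≤ 2 * MA ^ 2 + 2 * ((1 / (q : ℝ)) * ∑ i, C ^ 2 * ‖fc (w i)‖ ^ 2) := this
      _ = B w := by rw [hB, ← Finset.mul_sum]; field_simp
  have hSnn : ∀ w x, 0 ≤ S w x := fun w x => sq_nonneg _
  -- integrability of coordinate functions on the product space
  have hcoord : ∀ i : Fin q, Integrable (fun w : Fin q → Ω => ‖fc (w i)‖ ^ 2)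
      (volume : Measure (Fin q → Ω)) := by
    intro i
    have hFi : ∀ l : Fin q, Integrable (fun y : Ω => if l = i then ‖fc y‖ ^ 2 else 1) μ := by
      intro l
      by_cases hl : l = i
      · simpa [hl] using habsfc2_int
      · simpa [hl] using integrable_const (1 : ℝ)
    have hprod := Integrable.fintype_prod (𝕜 := ℝ)
      (f := fun l (y : Ω) => if l = i then ‖fc y‖ ^ 2 else 1) hFi
    refine hprod.congr (Filter.Eventually.of_forall fun w => ?_)
    simp
  have hB_int : Integrable B (volume : Measure (Fin q → Ω)) := by
    exact (integrable_const _).add ((integrable_finset_sum _ fun i _ => hcoord i).const_mul _)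
  have hSint : Integrable (Function.uncurry S)
      ((volume : Measure (Fin q → Ω)).prod χ) := by
    have hmp : MeasurePreserving Prod.fst ((volume : Measure (Fin q → Ω)).prod χ)
        (volume : Measure (Fin q → Ω)) := by
      refine ⟨measurable_fst, ?_⟩
      rw [Measure.map_fst_prod]
      simp
    have hBc : Integrable (fun p : (Fin q → Ω) × X => B p.1)
        ((volume : Measure (Fin q → Ω)).prod χ) :=
      (hmp.integrable_comp hB_int.aestronglyMeasurable).mpr hB_int
    refine Integrable.mono' hBc hSm.aestronglyMeasurable ?_
    refine Filter.Eventually.of_forall fun p => ?_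
    show ‖S p.1 p.2‖ ≤ B p.1
    rw [Real.norm_eq_abs, abs_of_nonneg (hSnn p.1 p.2)]
    exact hSB p.1 p.2
  set T : (Fin q → Ω) → ℝ := fun w => ∫ x, S w x ∂χ with hT
  have hTnn : ∀ w, 0 ≤ T w := fun w => integral_nonneg fun x => sq_nonneg _
  have hT_int : Integrable T (volume : Measure (Fin q → Ω)) := hSint.integral_prod_left
  have hT_le : ∫ w, T w ≤ C ^ 2 * V / q := by
    have hswap : ∫ w, T w = ∫ x, ∫ w, S w x ∂(volume : Measure (Fin q → Ω)) ∂χ :=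
      integral_integral_swap hSint
    rw [hswap]
    calc ∫ x, ∫ w, S w x ∂(volume : Measure (Fin q → Ω)) ∂χ
        ≤ ∫ _x, C ^ 2 * V / q ∂χ := by
          refine integral_mono hSint.integral_prod_right (integrable_const _) fun x => KEY x
      _ = C ^ 2 * V / q := by simp
  -- Jensen: ∫ sqrt T ≤ sqrt (∫ T)
  have hTm : AEStronglyMeasurable T (volume : Measure (Fin q → Ω)) :=
    hT_int.aestronglyMeasurable
  have hsqrtT_mem : MemLp (fun w => Real.sqrt (T w)) 2 (volume : Measure (Fin q → Ω)) := by
    rw [memLp_two_iff_integrable_sq (Real.continuous_sqrt.comp_aestronglyMeasurable hTm)]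
    refine hT_int.congr (Filter.Eventually.of_forall fun w => ?_)
    show T w = Real.sqrt (T w) ^ 2
    rw [Real.sq_sqrt (hTnn w)]
  have hjensen : ∫ w, Real.sqrt (T w) ≤ Real.sqrt (∫ w, T w) := by
    have hvar := ProbabilityTheory.variance_nonneg (fun w => Real.sqrt (T w))
      (volume : Measure (Fin q → Ω))
    rw [ProbabilityTheory.variance_eq_sub hsqrtT_mem] at hvar
    simp only [Pi.pow_apply] at hvar
    have hsq : (∫ w, Real.sqrt (T w)) ^ 2 ≤ ∫ w, Real.sqrt (T w) ^ 2 := by linarith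
    have h0 : 0 ≤ ∫ w, Real.sqrt (T w) := integral_nonneg fun w => Real.sqrt_nonneg _
    calc ∫ w, Real.sqrt (T w) = Real.sqrt ((∫ w, Real.sqrt (T w)) ^ 2) := by
          rw [Real.sqrt_sq h0]
      _ ≤ Real.sqrt (∫ w, Real.sqrt (T w) ^ 2) := Real.sqrt_le_sqrt hsq
      _ = Real.sqrt (∫ w, T w) := by
          congr 1
          refine integral_congr_ae (Filter.Eventually.of_forall fun w => ?_)
          show Real.sqrt (T w) ^ 2 = T w
          rw [Real.sq_sqrt (hTnn w)]
  have hfinal : Real.sqrt (∫ w, T w) ≤ C * Real.sqrt V / Real.sqrt q := by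
    calc Real.sqrt (∫ w, T w) ≤ Real.sqrt (C ^ 2 * V / q) :=
          Real.sqrt_le_sqrt hT_le
      _ = C * Real.sqrt V / Real.sqrt q := by
          rw [Real.sqrt_div (by positivity) (q : ℝ), Real.sqrt_mul (sq_nonneg C),
            Real.sqrt_sq hC]
  calc ∫ w : Fin q → Ω, Real.sqrt (∫ x, (f x - (1 / (q : ℝ)) * ∑ i, G (w i) x) ^ 2 ∂χ)
        ∂(Measure.pi fun _ : Fin q => μ)
      = ∫ w, Real.sqrt (T w) := by rw [hPvol]
    _ ≤ Real.sqrt (∫ w, T w) := hjensen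
    _ ≤ C * Real.sqrt V / Real.sqrt q := hfinal
end

section
/- Let (ψ, μ) be a C-bounded random feature scheme for a normalized kernel k on a set X. Define ψ' : (Ω × {0, π/2}) × X → ℝ by ψ'((ω, b), x) = √2 · Re(e^{ib} ψ(ω, x)), and let ν be the product of μ with the uniform distribution on the two-point set {0, π/2}. Then (ψ', ν) is a √2·C-bounded random feature scheme for k; that is, |ψ'((ω,b),x)| ≤ √2·C for all ω, b, x, and E_{(ω,b)∼ν}[ψ'((ω,b),x) · ψ'((ω,b),x')] = k(x,x') for all x, x' ∈ X. -/
open MeasureTheory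

/-- The phase shift: `b ↦ 0` for `false` and `b ↦ π/2` for `true`, encoding the
two-point set `{0, π/2}`. -/
noncomputable def phaseShift : Bool → ℝ := fun b => if b then Real.pi / 2 else 0

/-- **From complex to real random feature schemes.**
If `(ψ, μ)` is a `C`-bounded RFS for a normalized kernel `k`, then
`ψ'((ω,b),x) = √2 ⬝ Re(e^{ib} ψ(ω,x))`, with `b` uniform on `{0, π/2}` independent of `ω`,
is a `√2 C`-bounded real RFS for `k`. -/
theorem real_rfs_from_complex
    {Ω X : Type*} [MeasurableSpace Ω]
    (μ : Measure Ω) [IsProbabilityMeasure μ]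
    (ψ : Ω → X → ℂ) (k : X → X → ℝ) (C : ℝ)
    (hmeas : ∀ x, Measurable fun ω => ψ ω x)
    (hbdd : ∀ ω x, ‖ψ ω x‖ ≤ C)
    (hnormalized : ∀ x, k x x = 1)
    (hkernel : ∀ x x', ∫ ω, ψ ω x * (starRingEnd ℂ) (ψ ω x') ∂μ = (k x x' : ℂ))
    (ψ' : Ω × Bool → X → ℝ)
    (hψ' : ∀ p x, ψ' p x =
      Real.sqrt 2 * (Complex.exp (Complex.I * (phaseShift p.2 : ℂ)) * ψ p.1 x).re) :
    (∀ p x, |ψ' p x| ≤ Real.sqrt 2 * C) ∧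
    (∀ x x', ∫ p, ψ' p x * ψ' p x'
        ∂(μ.prod (PMF.uniformOfFintype Bool).toMeasure) = k x x') := by
  have habs : ∀ (b : Bool) (ω : Ω) (x : X),
      ‖Complex.exp (Complex.I * (phaseShift b : ℂ)) * ψ ω x‖ ≤ C := by
    intro b ω x
    rw [norm_mul]
    have h1 : ‖Complex.exp (Complex.I * (phaseShift b : ℂ))‖ = 1 := by
      rw [mul_comm]; exact Complex.norm_exp_ofReal_mul_I _
    rw [h1, one_mul]; exact hbdd ω x
  have hboundψ' : ∀ p x, |ψ' p x| ≤ Real.sqrt 2 * C := by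
    intro p x
    rw [hψ', abs_mul, abs_of_nonneg (Real.sqrt_nonneg 2)]
    exact mul_le_mul_of_nonneg_left
      ((Complex.abs_re_le_norm _).trans (habs p.2 p.1 x)) (Real.sqrt_nonneg 2)
  refine ⟨hboundψ', ?_⟩
  intro x x'
  -- measurability of ψ'
  have hmeasψ' : ∀ y, Measurable fun p : Ω × Bool => ψ' p y := by
    intro y
    have : (fun p : Ω × Bool => ψ' p y) = fun p =>
        Real.sqrt 2 * (Complex.exp (Complex.I * (phaseShift p.2 : ℂ)) * ψ p.1 y).re := by
      funext p; exact hψ' p y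
    rw [this]
    apply Measurable.const_mul
    apply Complex.measurable_re.comp
    exact Measurable.mul ((Measurable.of_discrete (f := fun b : Bool => Complex.exp (Complex.I * (phaseShift b : ℂ)))).comp measurable_snd) ((hmeas y).comp measurable_fst)
  -- integrability on the product
  have hintprod : Integrable (fun p : Ω × Bool => ψ' p x * ψ' p x')
      (μ.prod (PMF.uniformOfFintype Bool).toMeasure) := by
    refine Integrable.mono' (integrable_const ((Real.sqrt 2 * C) * (Real.sqrt 2 * C)))
      ((hmeasψ' x).mul (hmeasψ' x')).aestronglyMeasurable ?_
    filter_upwards with p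
    rw [Real.norm_eq_abs, abs_mul]
    exact mul_le_mul (hboundψ' p x) (hboundψ' p x') (abs_nonneg _)
      ((abs_nonneg _).trans (hboundψ' p x))
  rw [MeasureTheory.integral_prod _ hintprod]
  -- compute the inner integral over Bool
  have hinner : ∀ ω, (∫ b, ψ' (ω, b) x * ψ' (ω, b) x'
      ∂(PMF.uniformOfFintype Bool).toMeasure) = (ψ ω x * (starRingEnd ℂ) (ψ ω x')).re := by
    intro ω
    rw [PMF.integral_eq_sum]
    simp only [PMF.uniformOfFintype_apply, Fintype.card_bool, Fintype.sum_bool]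
    have hpt : ((2 : ℕ) : ENNReal)⁻¹.toReal = 1 / 2 := by norm_num
    rw [hpt]
    have hfalse : ∀ y, ψ' (ω, false) y = Real.sqrt 2 * (ψ ω y).re := by
      intro y
      rw [hψ']
      simp [phaseShift]
    have htrue : ∀ y, ψ' (ω, true) y = Real.sqrt 2 * (-(ψ ω y).im) := by
      intro y
      rw [hψ']
      simp only [phaseShift, if_true]
      congr 2
      rw [show Complex.I * ((Real.pi / 2 : ℝ) : ℂ) = ((Real.pi / 2 : ℝ) : ℂ) * Complex.I by ring,
        Complex.exp_mul_I]
      push_cast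
      rw [Complex.cos_pi_div_two, Complex.sin_pi_div_two]
      simp [Complex.mul_re, Complex.I_re, Complex.I_im]
    rw [hfalse, hfalse, htrue, htrue]
    have hsq : Real.sqrt 2 * Real.sqrt 2 = 2 := Real.mul_self_sqrt (by norm_num)
    simp only [smul_eq_mul, Complex.mul_re, Complex.conj_re, Complex.conj_im]
    linear_combination (((ψ ω x).im * (ψ ω x').im + (ψ ω x).re * (ψ ω x').re) / 2) * hsq
  simp only [hinner]
  -- integrate over ω
  have hintμ : Integrable (fun ω => ψ ω x * (starRingEnd ℂ) (ψ ω x')) μ := by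
    refine Integrable.mono' (integrable_const (C * C))
      (((hmeas x).mul (Complex.continuous_conj.measurable.comp (hmeas x'))) : Measurable fun ω => ψ ω x * (starRingEnd ℂ) (ψ ω x')).aestronglyMeasurable ?_
    filter_upwards with ω
    rw [norm_mul]
    simp only [Complex.norm_conj]
    exact mul_le_mul (hbdd ω x) (hbdd ω x') (norm_nonneg _)
      ((norm_nonneg _).trans (hbdd ω x))
  have h := integral_re (𝕜 := ℂ) hintμ
  simp only [RCLike.re_eq_complex_re] at h
  rw [h, hkernel x x', Complex.ofReal_re]
end

section
/- Let d ≥ 1 and ε > 0, and let S^{d−1} = {x ∈ ℝ^d : ‖x‖ = 1}. There is no (√(d/2) − ε)-bounded random feature scheme for the kernel k(x, x') = ⟨x, x'⟩ on S^{d−1}. Equivalently: for every probability measure μ on a measurable space Ω and every measurable ψ : Ω × S^{d−1} → ℂ satisfying E_{ω∼μ}[ψ(ω,x) · conj(ψ(ω,x'))] = ⟨x, x'⟩ for all x, x' ∈ S^{d−1}, one has sup_{ω,x} |ψ(ω, x)| ≥ √(d/2). -/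
open MeasureTheory

private lemma ae_eq_of_integrals' {Ω : Type*} [MeasurableSpace Ω] (μ : Measure Ω)
    (u v : Ω → ℂ)
    (huu : Integrable (fun ω => u ω * (starRingEnd ℂ) (u ω)) μ)
    (huv : Integrable (fun ω => u ω * (starRingEnd ℂ) (v ω)) μ)
    (hvu : Integrable (fun ω => v ω * (starRingEnd ℂ) (u ω)) μ)
    (hvv : Integrable (fun ω => v ω * (starRingEnd ℂ) (v ω)) μ)
    (h : ∫ ω, u ω * (starRingEnd ℂ) (u ω) ∂μ - ∫ ω, u ω * (starRingEnd ℂ) (v ω) ∂μ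
        - ∫ ω, v ω * (starRingEnd ℂ) (u ω) ∂μ + ∫ ω, v ω * (starRingEnd ℂ) (v ω) ∂μ = 0) :
    ∀ᵐ ω ∂μ, u ω = v ω := by
  have h12 : Integrable (fun ω => u ω * (starRingEnd ℂ) (u ω) - v ω * (starRingEnd ℂ) (u ω)) μ :=
    huu.sub hvu
  have h34 : Integrable (fun ω => u ω * (starRingEnd ℂ) (v ω) - v ω * (starRingEnd ℂ) (v ω)) μ :=
    huv.sub hvv
  have hint : Integrable (fun ω => (u ω - v ω) * (starRingEnd ℂ) (u ω - v ω)) μ := by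
    refine (h12.sub h34).congr (Filter.Eventually.of_forall fun ω => ?_)
    simp only [Pi.sub_apply, map_sub]; ring
  have hI : ∫ ω, (u ω - v ω) * (starRingEnd ℂ) (u ω - v ω) ∂μ = 0 := by
    simp only [map_sub, sub_mul, mul_sub]
    rw [integral_sub h12 h34, integral_sub huu hvu, integral_sub huv hvv]
    linear_combination h
  have hnsq : ∫ ω, Complex.normSq (u ω - v ω) ∂μ = 0 := by
    have h2 := integral_re hint
    rw [hI] at h2
    simp only [Complex.mul_conj, Complex.ofReal_re, Complex.zero_re] at h2
    exact h2
  have hint2 : Integrable (fun ω => Complex.normSq (u ω - v ω)) μ := by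
    refine hint.re.congr (Filter.Eventually.of_forall fun ω => ?_)
    simp [Complex.normSq_apply]; ring
  have h0 : (fun ω => Complex.normSq (u ω - v ω)) =ᵐ[μ] 0 := by
    rw [← integral_eq_zero_iff_of_nonneg (fun ω => Complex.normSq_nonneg _) hint2]
    exact hnsq
  filter_upwards [h0] with ω hω
  exact sub_eq_zero.mp (Complex.normSq_eq_zero.mp hω)

/-- **`√(d/2)`-boundedness is optimal for RFS on `S^{d−1}`.**
If `(ψ, μ)` is an RFS for the kernel `k(x,x') = ⟨x,x'⟩` on the unit sphere of `ℝ^d`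
(`d ≥ 1`), then any bound `C` with `|ψ(ω,x)| ≤ C` for all `ω, x` satisfies
`C ≥ √(d/2)`; i.e. `sup_{ω,x} |ψ(ω,x)| ≥ √(d/2)`, so for every `ε > 0` there is no
`(√(d/2) − ε)`-bounded RFS for this kernel. -/
theorem sphere_rfs_lower_bound
    {Ω : Type*} [MeasurableSpace Ω] (d : ℕ) (hd : 1 ≤ d)
    (μ : Measure Ω) [IsProbabilityMeasure μ]
    (ψ : Ω → Metric.sphere (0 : EuclideanSpace ℝ (Fin d)) 1 → ℂ)
    (hmeas : ∀ x, Measurable fun ω => ψ ω x)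
    (hL2 : ∀ x, MemLp (fun ω => ψ ω x) 2 μ)
    (hkernel : ∀ x x', ∫ ω, ψ ω x * (starRingEnd ℂ) (ψ ω x') ∂μ
      = ((inner ℝ x.1 x'.1 : ℝ) : ℂ))
    (C : ℝ) (hC : ∀ ω x, ‖ψ ω x‖ ≤ C) :
    Real.sqrt (d / 2) ≤ C := by
  classical
  have he : ∀ i : Fin d,
      EuclideanSpace.single i (1:ℝ) ∈ Metric.sphere (0 : EuclideanSpace ℝ (Fin d)) 1 := by
    intro i; simp [EuclideanSpace.norm_single]
  set e : Fin d → Metric.sphere (0 : EuclideanSpace ℝ (Fin d)) 1 :=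
    fun i => ⟨EuclideanSpace.single i (1:ℝ), he i⟩ with he_def
  -- integrability of all pair products
  have hint : ∀ x x', Integrable (fun ω => ψ ω x * (starRingEnd ℂ) (ψ ω x')) μ := by
    intro x x'
    refine ⟨((hmeas x).mul (continuous_star.measurable.comp (hmeas x'))).aestronglyMeasurable, ?_⟩
    refine HasFiniteIntegral.of_bounded (C := C * C) (Filter.Eventually.of_forall fun ω => ?_)
    have : ‖ψ ω x * (starRingEnd ℂ) (ψ ω x')‖ = ‖ψ ω x‖ * ‖ψ ω x'‖ := by
      simp [map_mul]
    rw [this]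
    exact mul_le_mul (hC ω x) (hC ω x') (norm_nonneg _)
      (le_trans (norm_nonneg _) (hC ω x))
  -- inner product facts
  have hinner_xx : ∀ x : Metric.sphere (0 : EuclideanSpace ℝ (Fin d)) 1,
      (inner ℝ x.1 x.1 : ℝ) = 1 := by
    intro x
    rw [real_inner_self_eq_norm_sq]
    have := mem_sphere_zero_iff_norm.mp x.2
    rw [this]; norm_num
  have hinner_xe : ∀ (x : Metric.sphere (0 : EuclideanSpace ℝ (Fin d)) 1) (i : Fin d),
      (inner ℝ x.1 (e i).1 : ℝ) = x.1 i := by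
    intro x i; simp [he_def, EuclideanSpace.inner_single_right]
  have hinner_ex : ∀ (x : Metric.sphere (0 : EuclideanSpace ℝ (Fin d)) 1) (i : Fin d),
      (inner ℝ (e i).1 x.1 : ℝ) = x.1 i := by
    intro x i; simp [he_def, EuclideanSpace.inner_single_left]
  have hinner_ee : ∀ i j : Fin d, (inner ℝ (e i).1 (e j).1 : ℝ) = if i = j then 1 else 0 := by
    intro i j
    simp [he_def, EuclideanSpace.inner_single_left, EuclideanSpace.single_apply, eq_comm]
  have hsumsq : ∀ x : Metric.sphere (0 : EuclideanSpace ℝ (Fin d)) 1,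
      ∑ i, (x.1 i) * (x.1 i) = 1 := by
    intro x
    have := hinner_xx x
    rw [PiLp.inner_apply] at this
    simpa [sq] using this
  -- a.e. linearity for each fixed x
  have lin : ∀ x : Metric.sphere (0 : EuclideanSpace ℝ (Fin d)) 1,
      ∀ᵐ ω ∂μ, ψ ω x = ∑ i, (x.1 i : ℂ) * ψ ω (e i) := by
    intro x
    have hv_u : Integrable (fun ω =>
        (∑ i, (x.1 i : ℂ) * ψ ω (e i)) * (starRingEnd ℂ) (ψ ω x)) μ := by
      have h1 : ∀ ω, (∑ i, (x.1 i : ℂ) * ψ ω (e i)) * (starRingEnd ℂ) (ψ ω x)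
          = ∑ i, (x.1 i : ℂ) * (ψ ω (e i) * (starRingEnd ℂ) (ψ ω x)) := by
        intro ω; rw [Finset.sum_mul]; congr 1; ext i; ring
      refine (integrable_finset_sum _ fun i _ => ((hint (e i) x).const_mul _)).congr
        (Filter.Eventually.of_forall fun ω => (h1 ω).symm)
    have hu_v : Integrable (fun ω =>
        ψ ω x * (starRingEnd ℂ) (∑ i, (x.1 i : ℂ) * ψ ω (e i))) μ := by
      have h1 : ∀ ω, ψ ω x * (starRingEnd ℂ) (∑ i, (x.1 i : ℂ) * ψ ω (e i))
          = ∑ i, (x.1 i : ℂ) * (ψ ω x * (starRingEnd ℂ) (ψ ω (e i))) := by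
        intro ω
        rw [map_sum, Finset.mul_sum]; congr 1; ext i
        rw [map_mul, Complex.conj_ofReal]; ring
      refine (integrable_finset_sum _ fun i _ => ((hint x (e i)).const_mul _)).congr
        (Filter.Eventually.of_forall fun ω => (h1 ω).symm)
    have hv_v : Integrable (fun ω => (∑ i, (x.1 i : ℂ) * ψ ω (e i))
        * (starRingEnd ℂ) (∑ j, (x.1 j : ℂ) * ψ ω (e j))) μ := by
      have h1 : ∀ ω, (∑ i, (x.1 i : ℂ) * ψ ω (e i))
            * (starRingEnd ℂ) (∑ j, (x.1 j : ℂ) * ψ ω (e j))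
          = ∑ i, ∑ j, ((x.1 i : ℂ) * (x.1 j : ℂ))
              * (ψ ω (e i) * (starRingEnd ℂ) (ψ ω (e j))) := by
        intro ω
        rw [map_sum, Finset.sum_mul_sum]
        congr 1; ext i; congr 1; ext j
        rw [map_mul, Complex.conj_ofReal]; ring
      refine (integrable_finset_sum _ fun i _ => integrable_finset_sum _ fun j _ =>
        ((hint (e i) (e j)).const_mul _)).congr
        (Filter.Eventually.of_forall fun ω => (h1 ω).symm)
    refine ae_eq_of_integrals' μ _ _ (hint x x) hu_v hv_u hv_v ?_
    have Iuu : ∫ ω, ψ ω x * (starRingEnd ℂ) (ψ ω x) ∂μ = 1 := by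
      rw [hkernel x x, hinner_xx x]; norm_num
    have Iuv : ∫ ω, ψ ω x * (starRingEnd ℂ) (∑ i, (x.1 i : ℂ) * ψ ω (e i)) ∂μ = 1 := by
      have heq : ∀ ω, ψ ω x * (starRingEnd ℂ) (∑ i, (x.1 i : ℂ) * ψ ω (e i))
          = ∑ i, (x.1 i : ℂ) * (ψ ω x * (starRingEnd ℂ) (ψ ω (e i))) := by
        intro ω
        rw [map_sum, Finset.mul_sum]; congr 1; ext i
        rw [map_mul, Complex.conj_ofReal]; ring
      rw [integral_congr_ae (Filter.Eventually.of_forall heq),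
        integral_finset_sum _ (fun i _ => (hint x (e i)).const_mul _)]
      have h2 : ∀ i : Fin d, ∫ ω, (x.1 i : ℂ) * (ψ ω x * (starRingEnd ℂ) (ψ ω (e i))) ∂μ
          = ((x.1 i : ℝ) : ℂ) * ((x.1 i : ℝ) : ℂ) := by
        intro i
        rw [integral_const_mul, hkernel x (e i), hinner_xe x i]
      rw [Finset.sum_congr rfl fun i _ => h2 i]
      exact_mod_cast hsumsq x
    have Ivu : ∫ ω, (∑ i, (x.1 i : ℂ) * ψ ω (e i)) * (starRingEnd ℂ) (ψ ω x) ∂μ = 1 := by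
      have heq : ∀ ω, (∑ i, (x.1 i : ℂ) * ψ ω (e i)) * (starRingEnd ℂ) (ψ ω x)
          = ∑ i, (x.1 i : ℂ) * (ψ ω (e i) * (starRingEnd ℂ) (ψ ω x)) := by
        intro ω; rw [Finset.sum_mul]; congr 1; ext i; ring
      rw [integral_congr_ae (Filter.Eventually.of_forall heq),
        integral_finset_sum _ (fun i _ => (hint (e i) x).const_mul _)]
      have h2 : ∀ i : Fin d, ∫ ω, (x.1 i : ℂ) * (ψ ω (e i) * (starRingEnd ℂ) (ψ ω x)) ∂μ
          = ((x.1 i : ℝ) : ℂ) * ((x.1 i : ℝ) : ℂ) := by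
        intro i
        rw [integral_const_mul, hkernel (e i) x, hinner_ex x i]
      rw [Finset.sum_congr rfl fun i _ => h2 i]
      exact_mod_cast hsumsq x
    have Ivv : ∫ ω, (∑ i, (x.1 i : ℂ) * ψ ω (e i))
        * (starRingEnd ℂ) (∑ j, (x.1 j : ℂ) * ψ ω (e j)) ∂μ = 1 := by
      have heq : ∀ ω, (∑ i, (x.1 i : ℂ) * ψ ω (e i))
            * (starRingEnd ℂ) (∑ j, (x.1 j : ℂ) * ψ ω (e j))
          = ∑ i, ∑ j, ((x.1 i : ℂ) * (x.1 j : ℂ))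
              * (ψ ω (e i) * (starRingEnd ℂ) (ψ ω (e j))) := by
        intro ω
        rw [map_sum, Finset.sum_mul_sum]
        congr 1; ext i; congr 1; ext j
        rw [map_mul, Complex.conj_ofReal]; ring
      rw [integral_congr_ae (Filter.Eventually.of_forall heq),
        integral_finset_sum _ (fun i _ => integrable_finset_sum _ fun j _ =>
          (hint (e i) (e j)).const_mul _)]
      have h2 : ∀ i : Fin d, ∫ ω, ∑ j, ((x.1 i : ℂ) * (x.1 j : ℂ))
          * (ψ ω (e i) * (starRingEnd ℂ) (ψ ω (e j))) ∂μ
          = ((x.1 i : ℝ) : ℂ) * ((x.1 i : ℝ) : ℂ) := by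
        intro i
        rw [integral_finset_sum _ (fun j _ => (hint (e i) (e j)).const_mul _)]
        have h3 : ∀ j : Fin d, ∫ ω, ((x.1 i : ℂ) * (x.1 j : ℂ))
            * (ψ ω (e i) * (starRingEnd ℂ) (ψ ω (e j))) ∂μ
            = ((x.1 i : ℂ) * (x.1 j : ℂ)) * (if i = j then 1 else 0) := by
          intro j
          rw [integral_const_mul, hkernel (e i) (e j), hinner_ee i j]
          split <;> norm_num
        rw [Finset.sum_congr rfl fun j _ => h3 j]
        simp
      rw [Finset.sum_congr rfl fun i _ => h2 i]
      exact_mod_cast hsumsq x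
    rw [Iuu, Iuv, Ivu, Ivv]; ring
  -- each |ψ(·,e i)|² has integral 1
  have hnsq_int : ∀ i : Fin d, Integrable (fun ω => Complex.normSq (ψ ω (e i))) μ := by
    intro i
    refine (hint (e i) (e i)).re.congr (Filter.Eventually.of_forall fun ω => ?_)
    simp [Complex.normSq_apply]
    try ring
  have hnsq_val : ∀ i : Fin d, ∫ ω, Complex.normSq (ψ ω (e i)) ∂μ = 1 := by
    intro i
    have h2 := integral_re (hint (e i) (e i))
    rw [hkernel (e i) (e i), hinner_ee i i] at h2
    simp only [Complex.mul_conj, Complex.ofReal_re, if_pos rfl, Complex.one_re] at h2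
    exact h2
  -- the sum function
  have hg_int : Integrable (fun ω => ∑ i, Complex.normSq (ψ ω (e i))) μ :=
    integrable_finset_sum _ fun i _ => hnsq_int i
  have hg_val : ∫ ω, ∑ i, Complex.normSq (ψ ω (e i)) ∂μ = d := by
    rw [integral_finset_sum _ fun i _ => hnsq_int i]
    simp [hnsq_val]
  -- the set where the sum is at least d has positive measure
  have hA : μ {ω | (d:ℝ) ≤ ∑ i, Complex.normSq (ψ ω (e i))} ≠ 0 := by
    intro h0
    have hlt : ∀ᵐ ω ∂μ, ∑ i, Complex.normSq (ψ ω (e i)) < d := by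
      rw [ae_iff]
      convert h0 using 2
      ext ω; simp [not_lt]
    have hpos : 0 ≤ᵐ[μ] fun ω => (d:ℝ) - ∑ i, Complex.normSq (ψ ω (e i)) := by
      filter_upwards [hlt] with ω hω
      simp only [Pi.zero_apply]; linarith
    have hintd : Integrable (fun ω => (d:ℝ) - ∑ i, Complex.normSq (ψ ω (e i))) μ :=
      (integrable_const _).sub hg_int
    have hIz : ∫ ω, ((d:ℝ) - ∑ i, Complex.normSq (ψ ω (e i))) ∂μ = 0 := by
      rw [integral_sub (integrable_const _) hg_int, hg_val]
      simp
    have := (integral_eq_zero_iff_of_nonneg_ae hpos hintd).mp hIz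
    have hcontra : ∀ᵐ ω ∂μ, False := by
      filter_upwards [this, hlt] with ω h1 h2
      have : (d:ℝ) - ∑ i, Complex.normSq (ψ ω (e i)) = 0 := h1
      linarith
    obtain ⟨ω, hfalse⟩ := hcontra.exists
    exact hfalse
  -- countable dense subset of the sphere
  obtain ⟨D, hDc, hDd⟩ :=
    TopologicalSpace.exists_countable_dense (Metric.sphere (0 : EuclideanSpace ℝ (Fin d)) 1)
  have hae : ∀ᵐ ω ∂μ, ∀ x ∈ D, ψ ω x = ∑ i, (x.1 i : ℂ) * ψ ω (e i) :=
    (MeasureTheory.ae_ball_iff hDc).mpr fun x _ => lin x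
  -- pick a good ω₀
  have hkey : μ ({ω | (d:ℝ) ≤ ∑ i, Complex.normSq (ψ ω (e i))}
      ∩ {ω | ∀ x ∈ D, ψ ω x = ∑ i, (x.1 i : ℂ) * ψ ω (e i)}) ≠ 0 := by
    intro h0
    apply hA
    have hBc : μ {ω | ∀ x ∈ D, ψ ω x = ∑ i, (x.1 i : ℂ) * ψ ω (e i)}ᶜ = 0 := by
      rw [ae_iff] at hae
      convert hae using 2
      rfl
    have hsub : {ω | (d:ℝ) ≤ ∑ i, Complex.normSq (ψ ω (e i))}
        ⊆ ({ω | (d:ℝ) ≤ ∑ i, Complex.normSq (ψ ω (e i))}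
          ∩ {ω | ∀ x ∈ D, ψ ω x = ∑ i, (x.1 i : ℂ) * ψ ω (e i)})
          ∪ {ω | ∀ x ∈ D, ψ ω x = ∑ i, (x.1 i : ℂ) * ψ ω (e i)}ᶜ := by
      intro ω hω
      by_cases hB : ω ∈ {ω | ∀ x ∈ D, ψ ω x = ∑ i, (x.1 i : ℂ) * ψ ω (e i)}
      · exact Or.inl ⟨hω, hB⟩
      · exact Or.inr hB
    refine le_antisymm ?_ (by positivity)
    calc μ {ω | (d:ℝ) ≤ ∑ i, Complex.normSq (ψ ω (e i))}
        ≤ μ (({ω | (d:ℝ) ≤ ∑ i, Complex.normSq (ψ ω (e i))}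
          ∩ {ω | ∀ x ∈ D, ψ ω x = ∑ i, (x.1 i : ℂ) * ψ ω (e i)})
          ∪ {ω | ∀ x ∈ D, ψ ω x = ∑ i, (x.1 i : ℂ) * ψ ω (e i)}ᶜ) := measure_mono hsub
      _ ≤ _ + _ := measure_union_le _ _
      _ = 0 := by rw [h0, hBc, add_zero]
  obtain ⟨ω₀, hω₀⟩ := nonempty_of_measure_ne_zero hkey
  obtain ⟨hg0, hlin0⟩ := hω₀
  have hg0' : (d:ℝ) ≤ ∑ i, Complex.normSq (ψ ω₀ (e i)) := hg0
  -- the linear functional L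
  set L : Metric.sphere (0 : EuclideanSpace ℝ (Fin d)) 1 → ℂ :=
    fun x => ∑ i, (x.1 i : ℂ) * ψ ω₀ (e i) with hL_def
  have hLcont : Continuous L := by
    refine continuous_finset_sum _ fun i _ => ?_
    exact ((Complex.continuous_ofReal.comp
      ((continuous_apply i).comp ((PiLp.continuous_ofLp (p := 2) (β := fun _ : Fin d => ℝ)).comp
        continuous_subtype_val))).mul continuous_const)
  have hLC : ∀ x, ‖L x‖ ≤ C := by
    intro x
    have hclosed : IsClosed {x | ‖L x‖ ≤ C} :=
      isClosed_le (continuous_norm.comp hLcont) continuous_const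
    have hsub : D ⊆ {x | ‖L x‖ ≤ C} := by
      intro y hy
      have : L y = ψ ω₀ y := (hlin0 y hy).symm
      simp only [Set.mem_setOf_eq, this]
      exact hC ω₀ y
    have := closure_minimal hsub hclosed
    rw [hDd.closure_eq] at this
    exact this (Set.mem_univ x)
  -- real and imaginary parts
  set r : Fin d → ℝ := fun i => (ψ ω₀ (e i)).re with hr_def
  set s : Fin d → ℝ := fun i => (ψ ω₀ (e i)).im with hs_def
  have hsum_rs : (d:ℝ) ≤ ∑ i, (r i ^ 2 + s i ^ 2) := by
    refine le_trans hg0' (le_of_eq (Finset.sum_congr rfl fun i _ => ?_))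
    simp [Complex.normSq_apply, hr_def, hs_def]; ring
  have hd2pos : (0:ℝ) < d / 2 := by
    have : (1:ℝ) ≤ d := by exact_mod_cast hd
    linarith
  -- the generic step: given a real vector t with Σ t² ≥ d/2 and
  -- |Σ (t i/‖t‖) * (ψ ω₀ (e i) component)| ≤ C we conclude.
  have main : ∀ t : Fin d → ℝ, (d/2 : ℝ) ≤ ∑ i, t i ^ 2 →
      Real.sqrt (∑ i, t i ^ 2) ≤ C → Real.sqrt (d/2) ≤ C := by
    intro t h1 h2
    exact le_trans (Real.sqrt_le_sqrt h1) h2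
  -- case split
  rcases le_or_gt (d/2 : ℝ) (∑ i, r i ^ 2) with hr2 | hr2
  · -- use the real part
    set R : ℝ := Real.sqrt (∑ i, r i ^ 2) with hR_def
    have hRpos : 0 < R := Real.sqrt_pos.mpr (lt_of_lt_of_le hd2pos hr2)
    have hRsq : R ^ 2 = ∑ i, r i ^ 2 := Real.sq_sqrt (by positivity)
    set y : EuclideanSpace ℝ (Fin d) := WithLp.toLp 2 (fun i => r i / R) with hy_def
    have hynorm : ‖y‖ = 1 := by
      rw [EuclideanSpace.norm_eq]
      have : ∑ i, ‖y i‖ ^ 2 = 1 := by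
        have : ∑ i, ‖y i‖ ^ 2 = (∑ i, r i ^ 2) / R ^ 2 := by
          rw [Finset.sum_div]
          refine Finset.sum_congr rfl fun i _ => ?_
          rw [Real.norm_eq_abs, sq_abs, hy_def, PiLp.toLp_apply]
          ring
        rw [this, ← hRsq, div_self (by positivity)]
      rw [this, Real.sqrt_one]
    have hymem : y ∈ Metric.sphere (0 : EuclideanSpace ℝ (Fin d)) 1 :=
      mem_sphere_zero_iff_norm.mpr hynorm
    have hLval : (L ⟨y, hymem⟩).re = R := by
      rw [hL_def]
      simp only
      rw [Complex.re_sum]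
      have : ∀ i : Fin d, ((((⟨y, hymem⟩ : Metric.sphere (0 : EuclideanSpace ℝ (Fin d)) 1).1 i : ℝ) : ℂ)
          * ψ ω₀ (e i)).re = (r i / R) * r i := by
        intro i
        simp [Complex.mul_re, Complex.ofReal_re, Complex.ofReal_im, hy_def, hr_def]
      rw [Finset.sum_congr rfl fun i _ => this i]
      have : ∑ i, (r i / R) * r i = (∑ i, r i ^ 2) / R := by
        rw [Finset.sum_div]
        refine Finset.sum_congr rfl fun i _ => ?_
        ring
      rw [this, ← hRsq]
      field_simp
      try ring
    have : R ≤ C := by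
      have h1 := hLC ⟨y, hymem⟩
      have h2 := Complex.abs_re_le_norm (L ⟨y, hymem⟩)
      rw [hLval] at h2
      calc R ≤ |R| := le_abs_self R
        _ ≤ ‖L ⟨y, hymem⟩‖ := h2
        _ ≤ C := h1
    exact main r hr2 this
  · -- use the imaginary part
    have hs2 : (d/2 : ℝ) ≤ ∑ i, s i ^ 2 := by
      have := Finset.sum_add_distrib (s := Finset.univ)
        (f := fun i => r i ^ 2) (g := fun i => s i ^ 2)
      rw [this] at hsum_rs
      linarith
    set R : ℝ := Real.sqrt (∑ i, s i ^ 2) with hR_def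
    have hRpos : 0 < R := Real.sqrt_pos.mpr (lt_of_lt_of_le hd2pos hs2)
    have hRsq : R ^ 2 = ∑ i, s i ^ 2 := Real.sq_sqrt (by positivity)
    set y : EuclideanSpace ℝ (Fin d) := WithLp.toLp 2 (fun i => s i / R) with hy_def
    have hynorm : ‖y‖ = 1 := by
      rw [EuclideanSpace.norm_eq]
      have : ∑ i, ‖y i‖ ^ 2 = 1 := by
        have : ∑ i, ‖y i‖ ^ 2 = (∑ i, s i ^ 2) / R ^ 2 := by
          rw [Finset.sum_div]
          refine Finset.sum_congr rfl fun i _ => ?_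
          rw [Real.norm_eq_abs, sq_abs, hy_def, PiLp.toLp_apply]
          ring
        rw [this, ← hRsq, div_self (by positivity)]
      rw [this, Real.sqrt_one]
    have hymem : y ∈ Metric.sphere (0 : EuclideanSpace ℝ (Fin d)) 1 :=
      mem_sphere_zero_iff_norm.mpr hynorm
    have hLval : (L ⟨y, hymem⟩).im = R := by
      rw [hL_def]
      simp only
      rw [Complex.im_sum]
      have : ∀ i : Fin d, ((((⟨y, hymem⟩ : Metric.sphere (0 : EuclideanSpace ℝ (Fin d)) 1).1 i : ℝ) : ℂ)
          * ψ ω₀ (e i)).im = (s i / R) * s i := by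
        intro i
        simp [Complex.mul_im, Complex.ofReal_re, Complex.ofReal_im, hy_def, hs_def]
      rw [Finset.sum_congr rfl fun i _ => this i]
      have : ∑ i, (s i / R) * s i = (∑ i, s i ^ 2) / R := by
        rw [Finset.sum_div]
        refine Finset.sum_congr rfl fun i _ => ?_
        ring
      rw [this, ← hRsq]
      field_simp
      try ring
    have : R ≤ C := by
      have h1 := hLC ⟨y, hymem⟩
      have h2 := Complex.abs_im_le_norm (L ⟨y, hymem⟩)
      rw [hLval] at h2
      calc R ≤ |R| := le_abs_self R
        _ ≤ ‖L ⟨y, hymem⟩‖ := h2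
        _ ≤ C := h1
    exact main s hs2 this
end

section
/- Let d ≥ 1, let S^{d−1} = {x ∈ ℝ^d : ‖x‖ = 1}, and let (ψ, μ) be a random feature scheme for the kernel k(x, x') = ⟨x, x'⟩ on S^{d−1}. Then for every a ∈ S^{d−1}, for μ-almost every ω ∈ Ω: ψ(ω, a) = ∑_{j=1}^d a_j ψ(ω, e_j), where e_1, …, e_d are the standard basis vectors of ℝ^d. -/
open MeasureTheory

/-- The `j`-th standard basis vector of `ℝ^d`, as a point of the unit sphere. -/
noncomputable def stdBasisSphere (d : ℕ) (j : Fin d) :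
    Metric.sphere (0 : EuclideanSpace ℝ (Fin d)) 1 :=
  ⟨EuclideanSpace.single j (1 : ℝ), by
    rw [mem_sphere_zero_iff_norm, EuclideanSpace.norm_single]
    norm_num⟩

private lemma lp_coeFn_finset_sum {Ω : Type*} [MeasurableSpace Ω] {μ : Measure Ω}
    {ι : Type*} (s : Finset ι) (g : ι → Lp ℂ 2 μ) :
    ⇑(∑ j ∈ s, g j) =ᵐ[μ] fun ω => ∑ j ∈ s, g j ω := by
  classical
  induction s using Finset.induction_on with
  | empty => simp only [Finset.sum_empty]; exact Lp.coeFn_zero (E := ℂ) (p := 2) (μ := μ)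
  | @insert i s hi ih =>
    rw [Finset.sum_insert hi]
    filter_upwards [Lp.coeFn_add (g i) (∑ j ∈ s, g j), ih] with ω h1 h2
    rw [h1, Pi.add_apply, h2, Finset.sum_insert hi]

/-- **Features of an RFS for the sphere kernel are a.s. linear.**
If `(ψ, μ)` is an RFS for the kernel `k(x,x') = ⟨x,x'⟩` on the unit sphere of `ℝ^d`, then
for every `a ∈ S^{d−1}`, for `μ`-almost every `ω`,
`ψ(ω,a) = ∑ⱼ aⱼ ψ(ω,eⱼ)` where `e₁,…,e_d` is the standard basis. -/
theorem rfs_sphere_linear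
    {Ω : Type*} [MeasurableSpace Ω] (d : ℕ) (hd : 1 ≤ d)
    (μ : Measure Ω) [IsProbabilityMeasure μ]
    (ψ : Ω → Metric.sphere (0 : EuclideanSpace ℝ (Fin d)) 1 → ℂ)
    (hmeas : ∀ x, Measurable fun ω => ψ ω x)
    (hL2 : ∀ x, MemLp (fun ω => ψ ω x) 2 μ)
    (hkernel : ∀ x x', ∫ ω, ψ ω x * (starRingEnd ℂ) (ψ ω x') ∂μ
      = ((inner ℝ x.1 x'.1 : ℝ) : ℂ))
    (a : Metric.sphere (0 : EuclideanSpace ℝ (Fin d)) 1) :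
    ∀ᵐ ω ∂μ, ψ ω a = ∑ j, (a.1 j : ℂ) * ψ ω (stdBasisSphere d j) := by
  classical
  let f : Metric.sphere (0 : EuclideanSpace ℝ (Fin d)) 1 → Lp ℂ 2 μ :=
    fun x => (hL2 x).toLp _
  have hinner : ∀ x y, (inner ℂ (f x) (f y) : ℂ) = ((inner ℝ x.1 y.1 : ℝ) : ℂ) := by
    intro x y
    rw [MeasureTheory.L2.inner_def]
    have h1 : (fun ω => (inner ℂ (f x ω) (f y ω) : ℂ)) =ᵐ[μ]
        fun ω => ψ ω y * (starRingEnd ℂ) (ψ ω x) := by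
      filter_upwards [(hL2 x).coeFn_toLp, (hL2 y).coeFn_toLp] with ω hx hy
      have hx' : f x ω = ψ ω x := hx
      have hy' : f y ω = ψ ω y := hy
      rw [hx', hy', RCLike.inner_apply, mul_comm]
    rw [integral_congr_ae h1, hkernel, real_inner_comm]
  set G : Lp ℂ 2 μ := ∑ j, (a.1 j : ℂ) • f (stdBasisSphere d j) with hG
  have hae : ∀ j, (inner ℝ a.1 (stdBasisSphere d j).1 : ℝ) = a.1 j := by
    intro j
    simp [stdBasisSphere, EuclideanSpace.inner_single_right]
  have hee : ∀ i j : Fin d, (inner ℝ (stdBasisSphere d i).1 (stdBasisSphere d j).1 : ℝ)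
      = if i = j then 1 else 0 := by
    intro i j
    simp only [stdBasisSphere, EuclideanSpace.inner_single_left, map_one, one_mul,
      EuclideanSpace.single_apply]
  have haa : (inner ℝ a.1 a.1 : ℝ) = 1 := by
    have : ‖a.1‖ = 1 := by simpa [mem_sphere_zero_iff_norm] using a.2
    rw [real_inner_self_eq_norm_sq, this]; norm_num
  set T : ℂ := ∑ j, (a.1 j : ℂ) * (a.1 j : ℂ) with hT
  have hT1 : T = 1 := by
    have h : (inner ℝ a.1 a.1 : ℝ) = ∑ j, a.1 j * a.1 j := by
      rw [PiLp.inner_apply]; simp [RCLike.inner_apply, sq]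
    have h2 : (∑ j, a.1 j * a.1 j : ℝ) = 1 := h ▸ haa
    rw [hT]
    push_cast
    exact_mod_cast congrArg (fun r : ℝ => (r : ℂ)) h2
  have h2 : (inner ℂ (f a) G : ℂ) = T := by
    rw [hG, inner_sum]
    simp_rw [inner_smul_right, hinner, hae]
    exact hT.symm
  have h3 : (inner ℂ G (f a) : ℂ) = T := by
    rw [hG, sum_inner]
    simp_rw [inner_smul_left, hinner, real_inner_comm a.1, hae]
    simp [hT, Complex.conj_ofReal]
  have h4 : (inner ℂ G G : ℂ) = T := by
    rw [hG, sum_inner]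
    simp_rw [inner_smul_left, inner_sum, inner_smul_right, hinner, hee]
    rw [hT]
    refine Finset.sum_congr rfl fun i _ => ?_
    rw [Finset.sum_eq_single i]
    · simp [Complex.conj_ofReal]
    · intro b _ hb; simp [Ne.symm hb]
    · simp
  have h1 : (inner ℂ (f a) (f a) : ℂ) = 1 := by rw [hinner, haa]; norm_num
  have hFF : (inner ℂ (f a - G) (f a - G) : ℂ) = 0 := by
    rw [inner_sub_sub_self, h1, h2, h3, h4, hT1]; ring
  have hfaG : f a = G := sub_eq_zero.mp (inner_self_eq_zero.mp hFF)
  have hsum := lp_coeFn_finset_sum (μ := μ) Finset.univ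
    (fun j => (a.1 j : ℂ) • f (stdBasisSphere d j))
  have hsmul : ∀ j : Fin d, ⇑((a.1 j : ℂ) • f (stdBasisSphere d j)) =ᵐ[μ]
      fun ω => (a.1 j : ℂ) * ψ ω (stdBasisSphere d j) := by
    intro j
    filter_upwards [Lp.coeFn_smul ((a.1 j : ℂ)) (f (stdBasisSphere d j)),
      (hL2 (stdBasisSphere d j)).coeFn_toLp] with ω h1' h2'
    have h2'' : f (stdBasisSphere d j) ω = ψ ω (stdBasisSphere d j) := h2'
    rw [h1', Pi.smul_apply, h2'', smul_eq_mul]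
  have hsmul' : ∀ᵐ ω ∂μ, ∀ j : Fin d, ((a.1 j : ℂ) • f (stdBasisSphere d j)) ω
      = (a.1 j : ℂ) * ψ ω (stdBasisSphere d j) :=
    (ae_all_iff).mpr hsmul
  filter_upwards [(hL2 a).coeFn_toLp, hsum, hsmul'] with ω hωa hωsum hωsmul
  calc ψ ω a = (f a) ω := (hωa : f a ω = ψ ω a).symm
    _ = G ω := by rw [hfaG]
    _ = ∑ j, ((a.1 j : ℂ) • f (stdBasisSphere d j)) ω := by rw [hG]; exact hωsum
    _ = ∑ j, (a.1 j : ℂ) * ψ ω (stdBasisSphere d j) :=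
        Finset.sum_congr rfl fun j _ => hωsmul j
end

section
/- Let (ψ¹, μ¹), …, (ψⁿ, μⁿ) be random feature schemes for normalized kernels k¹, …, kⁿ on a common set X, and let α₁, …, αₙ ≥ 0 with ∑_i α_i = 1. Let Ω be the disjoint union (sigma type) of Ω₁, …, Ωₙ, let μ = ∑_i α_i · (pushforward of μ^i under the inclusion Ω_i → Ω), and define ψ((i, ω), x) = ψ^i(ω, x). Then (ψ, μ) is a random feature scheme for the kernel k(x, x') = ∑_{i=1}^n α_i k^i(x, x'); i.e., E_{(i,ω)∼μ}[ψ((i,ω),x) · conj(ψ((i,ω),x'))] = ∑_i α_i k^i(x,x') for all x, x' ∈ X. -/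
open MeasureTheory

lemma measurable_sigmaMk' {n : ℕ} {Ω : Fin n → Type*} [∀ i, MeasurableSpace (Ω i)]
    (i : Fin n) : Measurable (Sigma.mk i : Ω i → Σ j, Ω j) :=
  Measurable.of_le_map (iInf_le _ i)

lemma measurable_of_sigma {n : ℕ} {Ω : Fin n → Type*} [∀ i, MeasurableSpace (Ω i)]
    {γ : Type*} [MeasurableSpace γ] {f : (Σ i, Ω i) → γ}
    (h : ∀ i, Measurable fun ω => f ⟨i, ω⟩) : Measurable f := by
  intro s hs
  show MeasurableSet[⨅ i, MeasurableSpace.map (Sigma.mk i) _] (f ⁻¹' s)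
  rw [MeasurableSpace.measurableSet_iInf]
  intro i
  exact h i hs

/-- **RFS for an average (convex combination) of kernels.**
Given RFSs `(ψⁱ, μⁱ)` for normalized kernels `kⁱ` on a common set `X` and weights
`αᵢ ≥ 0` with `∑ᵢ αᵢ = 1`, the scheme on the disjoint union `Σ i, Ωᵢ` that samples `i`
with probability `αᵢ`, then `ω ∼ μⁱ`, and emits the feature `x ↦ ψⁱ(ω,x)`, is an RFS for
the kernel `k(x,x') = ∑ᵢ αᵢ kⁱ(x,x')`. -/
theorem rfs_average
    {X : Type*} {n : ℕ} {Ω : Fin n → Type*} [∀ i, MeasurableSpace (Ω i)]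
    (μ : ∀ i, Measure (Ω i)) [∀ i, IsProbabilityMeasure (μ i)]
    (ψ : ∀ i, Ω i → X → ℂ) (k : Fin n → X → X → ℝ)
    (hmeas : ∀ i x, Measurable fun ω => ψ i ω x)
    (hL2 : ∀ i x, MemLp (fun ω => ψ i ω x) 2 (μ i))
    (hnormalized : ∀ i x, k i x x = 1)
    (hkernel : ∀ i x x',
      ∫ ω, ψ i ω x * (starRingEnd ℂ) (ψ i ω x') ∂(μ i) = (k i x x' : ℂ))
    (α : Fin n → ℝ) (hα : ∀ i, 0 ≤ α i) (hαsum : ∑ i, α i = 1) :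
    ∀ x x', ∫ p : Σ i, Ω i, ψ p.1 p.2 x * (starRingEnd ℂ) (ψ p.1 p.2 x')
        ∂(Measure.sum fun i => ENNReal.ofReal (α i) • Measure.map (Sigma.mk i) (μ i))
      = (((∑ i, α i * k i x x' : ℝ)) : ℂ) := by
  intro x x'
  set f : (Σ i, Ω i) → ℂ := fun p => ψ p.1 p.2 x * (starRingEnd ℂ) (ψ p.1 p.2 x') with hf
  have hfmeas : Measurable f := by
    apply measurable_of_sigma
    intro i
    exact (hmeas i x).mul ((RCLike.continuous_conj.measurable).comp (hmeas i x'))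
  have hint : ∀ i, Integrable (fun ω => ψ i ω x * (starRingEnd ℂ) (ψ i ω x')) (μ i) := by
    intro i
    have h2 : MemLp (fun ω => (starRingEnd ℂ) (ψ i ω x')) 2 (μ i) := by
      refine ⟨RCLike.continuous_conj.comp_aestronglyMeasurable (hL2 i x').1, ?_⟩
      have : eLpNorm (fun ω => (starRingEnd ℂ) (ψ i ω x')) 2 (μ i)
          = eLpNorm (fun ω => ψ i ω x') 2 (μ i) := by
        apply eLpNorm_congr_norm_ae
        filter_upwards with ω
        simp
      exact this ▸ (hL2 i x').2
    have hmem : MemLp ((fun ω => ψ i ω x) • fun ω => (starRingEnd ℂ) (ψ i ω x')) 1 (μ i) :=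
      h2.smul (hL2 i x) (hpqr := ⟨by simp [one_div, ENNReal.inv_two_add_inv_two]⟩)
    rw [memLp_one_iff_integrable] at hmem
    exact hmem
  have hintmap : ∀ i, Integrable f
      (ENNReal.ofReal (α i) • Measure.map (Sigma.mk i) (μ i)) := by
    intro i
    refine Integrable.smul_measure ?_ ENNReal.ofReal_ne_top
    rw [integrable_map_measure hfmeas.aestronglyMeasurable
      (measurable_sigmaMk' i).aemeasurable]
    exact hint i
  rw [Measure.sum_fintype, integral_finset_sum_measure (fun i _ => hintmap i)]
  have hterm : ∀ i : Fin n,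
      ∫ p, f p ∂(ENNReal.ofReal (α i) • Measure.map (Sigma.mk i) (μ i))
        = (α i : ℂ) * (k i x x' : ℂ) := by
    intro i
    rw [integral_smul_measure,
      integral_map (measurable_sigmaMk' i).aemeasurable hfmeas.aestronglyMeasurable,
      ENNReal.toReal_ofReal (hα i)]
    have : (fun ω => f ⟨i, ω⟩) = fun ω => ψ i ω x * (starRingEnd ℂ) (ψ i ω x') := rfl
    simp only [hf]
    rw [hkernel i x x']
    simp [Complex.real_smul]
  simp only [hterm]
  push_cast
  rfl
end
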